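/- Monotonicity of the q-mean in q: for all positive reals a ≠ b, the function q ↦ θ_q(a,b) is strictly increasing on (1,∞), where θ_q(a,b) := ((q−1)/q) (a^q − b^q)/(a^{q−1} − b^{q−1}). That is, for 1 < q₁ < q₂ one has θ_{q₁}(a,b) < θ_{q₂}(a,b). -/

import Mathlib

set_option maxHeartbeats 1000000

open Real Set

/-- For `1 < u`, `2 log u < u - 1/u`. -/
lemma two_log_lt (u : ℝ) (hu : 1 < u) : 2 * Real.log u < u - 1/u := by
  have hu0 : 0 < u := by linarith
  have h := Real.self_lt_sinh_iff.mpr (Real.log_pos hu)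
  rw [Real.sinh_eq, Real.exp_log hu0, Real.exp_neg, Real.exp_log hu0] at h
  have : (1:ℝ)/u = u⁻¹ := one_div u
  linarith [h]

/-- Strict convexity of `q ↦ log ((a^q - b^q)/q)` on `(0,∞)` for `0 < b < a`. -/
lemma G_strictConvexOn (a b : ℝ) (hb : 0 < b) (hba : b < a) :
    StrictConvexOn ℝ (Ioi (0:ℝ))
      (fun q => Real.log (a ^ q - b ^ q) - Real.log q) := by
  have ha : 0 < a := hb.trans hba
  set G : ℝ → ℝ := fun q => Real.log (a ^ q - b ^ q) - Real.log q with hG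
  set G1 : ℝ → ℝ := fun q =>
    (a ^ q * Real.log a - b ^ q * Real.log b) / (a ^ q - b ^ q) - q⁻¹ with hG1def
  set G2 : ℝ → ℝ := fun q =>
    ((a ^ q * Real.log a * Real.log a - b ^ q * Real.log b * Real.log b) * (a ^ q - b ^ q)
        - (a ^ q * Real.log a - b ^ q * Real.log b) * (a ^ q * Real.log a - b ^ q * Real.log b))
      / (a ^ q - b ^ q) ^ 2 + (q ^ 2)⁻¹ with hG2def
  have hsub : ∀ q : ℝ, 0 < q → 0 < a ^ q - b ^ q := fun q hq =>
    sub_pos.mpr (Real.rpow_lt_rpow hb.le hba hq)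
  have hderivφ : ∀ q : ℝ, HasDerivAt (fun q : ℝ => a ^ q - b ^ q)
      (a ^ q * Real.log a - b ^ q * Real.log b) q := fun q =>
    ((Real.hasStrictDerivAt_const_rpow ha q).hasDerivAt).sub
      ((Real.hasStrictDerivAt_const_rpow hb q).hasDerivAt)
  have hG' : ∀ q ∈ Ioi (0:ℝ), HasDerivAt G (G1 q) q := by
    intro q hq
    have hq0 : 0 < q := hq
    exact ((hderivφ q).log (hsub q hq0).ne').sub (Real.hasDerivAt_log hq0.ne')
  have hG1' : ∀ q ∈ Ioi (0:ℝ), HasDerivAt G1 (G2 q) q := by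
    intro q hq
    have hq0 : 0 < q := hq
    have hnum : HasDerivAt (fun q : ℝ => a ^ q * Real.log a - b ^ q * Real.log b)
        (a ^ q * Real.log a * Real.log a - b ^ q * Real.log b * Real.log b) q :=
      (((Real.hasStrictDerivAt_const_rpow ha q).hasDerivAt).mul_const (Real.log a)).sub
        (((Real.hasStrictDerivAt_const_rpow hb q).hasDerivAt).mul_const (Real.log b))
    have hdiv := hnum.div (hderivφ q) (hsub q hq0).ne'
    have hinv := (hasDerivAt_inv hq0.ne')
    have h := hdiv.sub hinv
    rw [sub_neg_eq_add] at h
    exact h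
  have hcont : ContinuousOn G (Ioi (0:ℝ)) := fun q hq =>
    (hG' q hq).differentiableAt.continuousAt.continuousWithinAt
  apply strictConvexOn_of_deriv2_pos (convex_Ioi 0) hcont
  intro q hq
  rw [interior_Ioi] at hq
  have hq0 : 0 < q := hq
  -- identify the second derivative
  have hd1 : EqOn (deriv G) G1 (Ioi (0:ℝ)) := fun x hx => (hG' x hx).deriv
  have hd2 : deriv (deriv G) q = G2 q := by
    have hev : deriv G =ᶠ[nhds q] G1 :=
      Filter.eventuallyEq_of_mem (isOpen_Ioi.mem_nhds hq) hd1
    rw [hev.deriv_eq]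
    exact (hG1' q hq).deriv
  have h2 : deriv^[2] G q = G2 q := by
    simp only [Function.iterate_succ, Function.iterate_zero, Function.comp_apply, id_eq]
    exact hd2
  rw [h2]
  -- positivity of G2
  set u : ℝ := (a / b) ^ (q / 2) with hu_def
  have hab1 : 1 < a / b := (one_lt_div hb).mpr hba
  have hu1 : 1 < u := Real.one_lt_rpow_iff_of_pos (by positivity) |>.mpr (Or.inl ⟨hab1, by linarith⟩)
  have hu0 : 0 < u := by linarith
  have huu : u * u = a ^ q / b ^ q := by
    rw [hu_def, ← Real.rpow_add (by linarith), ← Real.div_rpow ha.le hb.le]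
    norm_num
  have hlogu : 2 * Real.log u = q * (Real.log a - Real.log b) := by
    rw [hu_def, Real.log_rpow (by linarith), Real.log_div ha.ne' hb.ne']
    ring
  have hbq : 0 < b ^ q := Real.rpow_pos_of_pos hb q
  have haq : a ^ q = b ^ q * (u * u) := by
    rw [huu]; field_simp
  have hkey := two_log_lt u hu1
  -- 2*u*log u < u*u - 1
  have hkey2 : 2 * u * Real.log u < u * u - 1 := by
    have := mul_lt_mul_of_pos_left hkey hu0
    have h1u : u * (1/u) = 1 := by field_simp
    nlinarith
  have hlogu_pos : 0 < Real.log u := Real.log_pos hu1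
  -- (2 u log u)^2 < (u*u-1)^2
  have hsq : (2 * u * Real.log u) ^ 2 < (u * u - 1) ^ 2 := by
    have h0 : 0 < 2 * u * Real.log u := by positivity
    nlinarith
  -- main numerator identity:
  have hnum_id : (a ^ q * Real.log a * Real.log a - b ^ q * Real.log b * Real.log b)
        * (a ^ q - b ^ q)
      - (a ^ q * Real.log a - b ^ q * Real.log b) * (a ^ q * Real.log a - b ^ q * Real.log b)
      = -(a ^ q * b ^ q * (Real.log a - Real.log b) ^ 2) := by ring
  have hφ : 0 < a ^ q - b ^ q := hsub q hq0
  -- goal: 0 < G2 q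
  show 0 < _ + (q ^ 2)⁻¹
  rw [hnum_id]
  rw [neg_div, neg_add_eq_sub, sub_pos, div_lt_iff₀ (by positivity)]
  -- a^q*b^q*(log a - log b)^2 < (q^2)⁻¹ * (a^q - b^q)^2
  rw [inv_mul_eq_div, lt_div_iff₀ (by positivity)]
  -- a^q*b^q*(log a - log b)^2 * q^2 < (a^q-b^q)^2
  have e1 : a ^ q * b ^ q * (Real.log a - Real.log b) ^ 2 * q ^ 2
      = (b ^ q) ^ 2 * (2 * u * Real.log u) ^ 2 := by
    rw [haq]
    have hth : q * (Real.log a - Real.log b) = 2 * Real.log u := hlogu.symm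
    linear_combination ((b ^ q) ^ 2 * (u * u) * (q * (Real.log a - Real.log b)
      + 2 * Real.log u)) * hth
  have e2 : (a ^ q - b ^ q) ^ 2 = (b ^ q) ^ 2 * (u * u - 1) ^ 2 := by
    rw [haq]; ring
  rw [e1, e2]
  exact mul_lt_mul_of_pos_left hsq (by positivity)

/-- Main inequality in the case `0 < b < a`. -/
lemma qMean_lt_of_lt (a b q₁ q₂ : ℝ) (hb : 0 < b) (hba : b < a)
    (hq₁ : 1 < q₁) (hq₁₂ : q₁ < q₂) :
    (q₁ - 1)/q₁ * (a ^ q₁ - b ^ q₁) / (a ^ (q₁ - 1) - b ^ (q₁ - 1)) <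
      (q₂ - 1)/q₂ * (a ^ q₂ - b ^ q₂) / (a ^ (q₂ - 1) - b ^ (q₂ - 1)) := by
  have ha : 0 < a := hb.trans hba
  set G : ℝ → ℝ := fun q => Real.log (a ^ q - b ^ q) - Real.log q with hGdef
  have hconv := G_strictConvexOn a b hb hba
  have hsub : ∀ q : ℝ, 0 < q → 0 < a ^ q - b ^ q := fun q hq =>
    sub_pos.mpr (Real.rpow_lt_rpow hb.le hba hq)
  -- the representation θ_q = exp (G q - G (q-1)) for q > 1
  have hrep : ∀ q : ℝ, 1 < q →
      (q - 1)/q * (a ^ q - b ^ q) / (a ^ (q - 1) - b ^ (q - 1))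
        = Real.exp (G q - G (q - 1)) := by
    intro q hq
    have hq0 : 0 < q := by linarith
    have hq1 : 0 < q - 1 := by linarith
    have h1 : 0 < a ^ q - b ^ q := hsub q hq0
    have h2 : 0 < a ^ (q - 1) - b ^ (q - 1) := hsub _ hq1
    have e1 : Real.exp (G q) = (a ^ q - b ^ q) / q := by
      simp only [hGdef]
      rw [Real.exp_sub, Real.exp_log h1, Real.exp_log hq0]
    have e2 : Real.exp (G (q - 1)) = (a ^ (q - 1) - b ^ (q - 1)) / (q - 1) := by
      simp only [hGdef]
      rw [Real.exp_sub, Real.exp_log h2, Real.exp_log hq1]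
    rw [Real.exp_sub, e1, e2]
    field_simp
  -- convexity at the four points q₁-1 < q₁, q₂-1 < q₂
  have hd : 0 < q₂ - q₁ := by linarith
  set μ : ℝ := (q₂ - q₁) / (q₂ - q₁ + 1) with hμdef
  have hden : 0 < q₂ - q₁ + 1 := by linarith
  have hμ0 : 0 < μ := div_pos hd hden
  have hμ1 : μ < 1 := (div_lt_one hden).mpr (by linarith)
  have hx : (q₁ - 1 : ℝ) ∈ Ioi (0:ℝ) := by simp; linarith
  have hy : (q₂ : ℝ) ∈ Ioi (0:ℝ) := by simp; linarith
  have hxy : (q₁ - 1 : ℝ) ≠ q₂ := by linarith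
  have hc1 : μ * (q₁ - 1) + (1 - μ) * q₂ = q₁ := by
    rw [hμdef]; field_simp; ring
  have hc2 : (1 - μ) * (q₁ - 1) + μ * q₂ = q₂ - 1 := by
    rw [hμdef]; field_simp; ring
  have hA := hconv.2 hx hy hxy hμ0 (by linarith : (0:ℝ) < 1 - μ) (by ring)
  have hB := hconv.2 hx hy hxy (by linarith : (0:ℝ) < 1 - μ) hμ0 (by ring)
  simp only [smul_eq_mul] at hA hB
  rw [hc1] at hA
  rw [hc2] at hB
  change G q₁ < μ * G (q₁ - 1) + (1 - μ) * G q₂ at hA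
  change G (q₂ - 1) < (1 - μ) * G (q₁ - 1) + μ * G q₂ at hB
  have hsum : G q₁ + G (q₂ - 1) < G (q₁ - 1) + G q₂ := by
    have hid : μ * G (q₁ - 1) + (1 - μ) * G q₂
        + ((1 - μ) * G (q₁ - 1) + μ * G q₂) = G (q₁ - 1) + G q₂ := by ring
    linarith
  rw [hrep q₁ hq₁, hrep q₂ (hq₁.trans hq₁₂)]
  exact Real.exp_lt_exp.mpr (by linarith)

/-- **Strict monotonicity of the `q`-mean in `q`.**
For distinct positive reals `a ≠ b` and `1 < q₁ < q₂`,
`θ_{q₁}(a,b) < θ_{q₂}(a,b)`, where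
`θ_q(a,b) := ((q−1)/q) (a^q − b^q)/(a^{q−1} − b^{q−1})`. -/
theorem qMean_strictMono (a b q₁ q₂ : ℝ) (ha : 0 < a) (hb : 0 < b) (hab : a ≠ b)
    (hq₁ : 1 < q₁) (hq₁₂ : q₁ < q₂) :
    (q₁ - 1)/q₁ * (a ^ q₁ - b ^ q₁) / (a ^ (q₁ - 1) - b ^ (q₁ - 1)) <
      (q₂ - 1)/q₂ * (a ^ q₂ - b ^ q₂) / (a ^ (q₂ - 1) - b ^ (q₂ - 1)) := by
  rcases hab.lt_or_gt with h | h
  · -- a < b : swap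
    have key : ∀ q : ℝ,
        (q - 1)/q * (a ^ q - b ^ q) / (a ^ (q - 1) - b ^ (q - 1))
          = (q - 1)/q * (b ^ q - a ^ q) / (b ^ (q - 1) - a ^ (q - 1)) := by
      intro q
      rw [show a ^ q - b ^ q = -(b ^ q - a ^ q) by ring,
        show a ^ (q - 1) - b ^ (q - 1) = -(b ^ (q - 1) - a ^ (q - 1)) by ring,
        mul_neg, neg_div_neg_eq]
    rw [key q₁, key q₂]
    exact qMean_lt_of_lt b a q₁ q₂ ha h hq₁ hq₁₂
  · exact qMean_lt_of_lt a b q₁ q₂ hb h hq₁ hq₁₂
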